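/- arXiv:1905.10406 — 9 statements merged into one kernel-verified Lean document; each statement's English description precedes it below -/
import Mathlib

section
/- Let m and n be positive integers with m < n and m odd, and let α be any real number. Then the sum over k from 1 to n of cos(α - (k-1)·2π/n)^m equals 0. -/
open Real Finset

lemma aux_geom (n : ℕ) (w : ℂ) (hw1 : w ≠ 1) (hwn : w ^ n = 1) :
    ∑ i ∈ Finset.range n, w ^ i = 0 := by
  rw [geom_sum_eq hw1, hwn, sub_self, zero_div]

theorem cos_odd_pow_sum (m n : ℕ) (hm : 0 < m) (hmn : m < n) (hodd : Odd m) (α : ℝ) :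
    ∑ k ∈ Finset.Icc 1 n, Real.cos (α - ((k : ℝ) - 1) * (2 * π / n)) ^ m = 0 := by
  have hn0 : 0 < n := lt_trans hm hmn
  have hnC : (n : ℂ) ≠ 0 := Nat.cast_ne_zero.mpr hn0.ne'
  have hπ : (π : ℂ) ≠ 0 := Complex.ofReal_ne_zero.mpr Real.pi_ne_zero
  have key : ∑ k ∈ Finset.Icc 1 n,
      (Complex.cos ((α : ℂ) - ((k : ℂ) - 1) * (2 * (π : ℂ) / n))) ^ m = 0 := by
    set c : ℂ := 2 * (π : ℂ) / n with hc
    have hcos : ∀ z : ℂ, Complex.cos z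
        = (Complex.exp (z * Complex.I) + Complex.exp (-z * Complex.I)) / 2 := by
      intro z
      have := Complex.two_cos (x := z)
      linear_combination this / 2
    have expand : ∀ z : ℂ, Complex.cos z ^ m
        = ∑ j ∈ Finset.range (m + 1),
            Complex.exp (z * Complex.I) ^ j * Complex.exp (-z * Complex.I) ^ (m - j)
              * (m.choose j : ℂ) / 2 ^ m := by
      intro z
      rw [hcos, div_pow, add_pow, Finset.sum_div]
    simp only [expand]
    rw [Finset.sum_comm]
    apply Finset.sum_eq_zero
    intro j hj
    rw [Finset.mem_range, Nat.lt_succ_iff] at hj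
    set t : ℤ := 2 * (j : ℤ) - m with ht
    have htodd : Odd t := by
      rcases hodd with ⟨l, hl⟩
      have hl' : (m : ℤ) = 2 * l + 1 := by exact_mod_cast hl
      exact ⟨(j : ℤ) - l - 1, by rw [ht]; omega⟩
    have htne : t ≠ 0 := by
      intro h; rw [h] at htodd; simp at htodd
    have hndvd : ¬ ((n : ℤ) ∣ t) := by
      intro hdvd
      have h1 := Int.le_of_dvd (abs_pos.mpr htne) (hdvd.trans (self_dvd_abs t))
      have h2 : |t| ≤ (m : ℤ) := by rw [abs_le]; omega
      omega
    suffices h : ∑ k ∈ Finset.Icc 1 n,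
        Complex.exp (((α : ℂ) - ((k : ℂ) - 1) * c) * Complex.I) ^ j
          * Complex.exp (-((α : ℂ) - ((k : ℂ) - 1) * c) * Complex.I) ^ (m - j) = 0 by
      rw [← Finset.sum_div, ← Finset.sum_mul, h, zero_mul, zero_div]
    have hw : Complex.exp (-(t : ℂ) * c * Complex.I) ≠ 1 := by
      intro h
      rw [Complex.exp_eq_one_iff] at h
      obtain ⟨k, hk⟩ := h
      apply hndvd ⟨-k, ?_⟩
      have e : -(t : ℂ) * (2 * (π : ℂ) / n) * Complex.I = (k : ℂ) * (2 * π * Complex.I) := by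
        rw [← hc]; exact hk
      have e2 : (t : ℂ) = (n : ℂ) * (-k) := by
        field_simp at e
        have e3 : (t : ℂ) * (2 * π * Complex.I) = ((n : ℂ) * (-k)) * (2 * π * Complex.I) := by
          linear_combination (-(2 * π * Complex.I)) * e
        exact mul_right_cancel₀ (by simp [hπ, Complex.I_ne_zero, Real.pi_ne_zero]) e3
      exact_mod_cast e2
    have hwn : Complex.exp (-(t : ℂ) * c * Complex.I) ^ n = 1 := by
      rw [← Complex.exp_nat_mul]
      have e : (n : ℂ) * (-(t : ℂ) * c * Complex.I) = (-t : ℤ) * (2 * π * Complex.I) := by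
        push_cast
        rw [hc]
        field_simp
      rw [e, Complex.exp_int_mul_two_pi_mul_I]
    have hterm : ∀ k ∈ Finset.Icc 1 n,
        Complex.exp (((α : ℂ) - ((k : ℂ) - 1) * c) * Complex.I) ^ j
          * Complex.exp (-((α : ℂ) - ((k : ℂ) - 1) * c) * Complex.I) ^ (m - j)
        = Complex.exp ((t : ℂ) * α * Complex.I)
            * Complex.exp (-(t : ℂ) * c * Complex.I) ^ (k - 1) := by
      intro k hk
      rw [Finset.mem_Icc] at hk
      rw [← Complex.exp_nat_mul, ← Complex.exp_nat_mul, ← Complex.exp_nat_mul,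
        ← Complex.exp_add, ← Complex.exp_add]
      have hk1 : ((k - 1 : ℕ) : ℂ) = (k : ℂ) - 1 := by
        have := Nat.cast_sub (R := ℂ) hk.1
        simpa using this
      have hmj : ((m - j : ℕ) : ℂ) = (m : ℂ) - j := by
        have := Nat.cast_sub (R := ℂ) hj
        simpa using this
      have htC : (t : ℂ) = 2 * j - m := by rw [ht]; push_cast; ring
      rw [hk1, hmj, htC]; ring
    rw [Finset.sum_congr rfl hterm, ← Finset.mul_sum]
    apply mul_eq_zero_of_right
    rw [← Finset.Ico_add_one_right_eq_Icc, Finset.sum_Ico_eq_sum_range]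
    simp only [Nat.add_sub_cancel, Nat.add_sub_cancel_left]
    exact aux_geom n _ hw hwn
  have keyR : ((∑ k ∈ Finset.Icc 1 n,
      Real.cos (α - ((k : ℝ) - 1) * (2 * π / n)) ^ m : ℝ) : ℂ) = 0 := by
    push_cast [Complex.ofReal_cos]
    convert key using 3
  exact_mod_cast keyR
end

section
/- Let m and n be positive integers with m < n and m even, and let α be any real number. Then the sum over k from 1 to n of cos(α - (k-1)·2π/n)^m equals n · (m choose m/2) / 2^m. -/
open Real Finset

set_option maxRecDepth 4000

lemma inner_sum_aux (n : ℕ) (hn : 0 < n) (t : ℤ) (ht : t ≠ 0) (htlt : t.natAbs < n) :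
    ∑ k ∈ Finset.range n, Complex.exp ((t : ℂ) * (2 * π / n) * Complex.I) ^ k = 0 := by
  set w : ℂ := Complex.exp ((t : ℂ) * (2 * π / n) * Complex.I) with hw
  have hn0 : (n : ℂ) ≠ 0 := by exact_mod_cast hn.ne'
  have hwn : w ^ n = 1 := by
    rw [hw, ← Complex.exp_nat_mul]
    have h : (n : ℂ) * ((t : ℂ) * (2 * π / n) * Complex.I) = (t : ℂ) * (2 * π * Complex.I) := by
      field_simp
    rw [h, Complex.exp_int_mul_two_pi_mul_I]
  have hw1 : w ≠ 1 := by
    rw [hw, Ne, Complex.exp_eq_one_iff]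
    rintro ⟨q, hq⟩
    have hI : (Complex.I : ℂ) ≠ 0 := Complex.I_ne_zero
    have hpi : (π : ℂ) ≠ 0 := by exact_mod_cast Real.pi_ne_zero
    have htq : (t : ℂ) = q * n := by
      have h2 : ((t : ℂ) - q * n) * (2 * π * Complex.I) = 0 := by
        field_simp at hq
        linear_combination (2 * (π:ℂ) * Complex.I) * hq
      rcases mul_eq_zero.1 h2 with h | h
      · exact sub_eq_zero.1 h
      · exact absurd h (mul_ne_zero (mul_ne_zero two_ne_zero hpi) hI)
    have htq' : t = q * n := by exact_mod_cast htq
    have : (n : ℤ) ≤ t.natAbs := by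
      have hq0 : q ≠ 0 := by rintro rfl; simp at htq'; exact ht htq'
      calc (n : ℤ) = 1 * n := (one_mul _).symm
        _ ≤ |q| * n := by
            have : (1 : ℤ) ≤ |q| := Int.one_le_abs hq0
            exact mul_le_mul_of_nonneg_right this (by positivity)
        _ = |q * n| := by rw [abs_mul, abs_of_nonneg (by positivity : (0:ℤ) ≤ (n:ℤ))]
        _ = t.natAbs := by rw [← htq', Int.abs_eq_natAbs]
    omega
  rw [geom_sum_eq hw1 n, hwn, sub_self, zero_div]

lemma cos_pow_expand (m : ℕ) (z : ℂ) :
    Complex.cos z ^ m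
      = (∑ j ∈ Finset.range (m+1),
          Complex.exp ((2*(j:ℂ) - m) * z * Complex.I) * (m.choose j)) / 2 ^ m := by
  have hc : Complex.cos z = (Complex.exp (z*Complex.I) + Complex.exp (-z*Complex.I)) / 2 := rfl
  rw [hc, div_pow, add_pow]
  congr 1
  refine Finset.sum_congr rfl fun j hj => ?_
  have hj' : j ≤ m := Nat.lt_succ_iff.1 (Finset.mem_range.1 hj)
  rw [← Complex.exp_nat_mul, ← Complex.exp_nat_mul, ← Complex.exp_add]
  congr 2
  push_cast [Nat.cast_sub hj']
  ring

theorem cos_even_pow_sum (m n : ℕ) (hm : 0 < m) (hmn : m < n) (heven : Even m) (α : ℝ) :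
    ∑ k ∈ Finset.Icc 1 n, Real.cos (α - ((k : ℝ) - 1) * (2 * π / n)) ^ m
      = n * (m.choose (m / 2)) / 2 ^ m := by
  have hn : 0 < n := hm.trans hmn
  rw [← Complex.ofReal_inj]
  push_cast [Complex.ofReal_cos]
  have hexp : ∀ k : ℕ, Complex.cos ((α:ℂ) - ((k:ℂ) - 1) * (2 * (π:ℂ) / n)) ^ m
      = (∑ j ∈ Finset.range (m+1),
          Complex.exp ((2*(j:ℂ) - m) * ((α:ℂ) - ((k:ℂ) - 1) * (2 * (π:ℂ) / n)) * Complex.I)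
            * (m.choose j)) / 2 ^ m := fun k => cos_pow_expand m _
  calc ∑ k ∈ Finset.Icc 1 n, Complex.cos ((α:ℂ) - ((k:ℂ) - 1) * (2 * (π:ℂ) / n)) ^ m
      = (∑ j ∈ Finset.range (m+1), ∑ k ∈ Finset.Icc 1 n,
          Complex.exp ((2*(j:ℂ) - m) * ((α:ℂ) - ((k:ℂ) - 1) * (2 * (π:ℂ) / n)) * Complex.I)
            * (m.choose j)) / 2 ^ m := by
        simp_rw [hexp, ← Finset.sum_div]
        rw [Finset.sum_comm]
    _ = ((n : ℂ) * (m.choose (m/2))) / 2 ^ m := by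
        congr 1
        rw [Finset.sum_eq_single (m/2)]
        · -- main term
          have h2 : (2 * ((m/2 : ℕ) : ℂ) - m) = 0 := by
            have h := Nat.div_mul_cancel heven.two_dvd
            have h' : ((m / 2 * 2 : ℕ) : ℂ) = (m : ℂ) := by rw [h]
            push_cast at h'
            linear_combination h'
          simp only [h2, zero_mul, Complex.exp_zero, one_mul, Finset.sum_const,
            Nat.card_Icc, nsmul_eq_mul, Nat.add_sub_cancel]
        · intro j hj hne
          have hj' : j ≤ m := Nat.lt_succ_iff.1 (Finset.mem_range.1 hj)
          rw [← Finset.sum_mul]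
          have hzero : ∑ k ∈ Finset.Icc 1 n,
              Complex.exp ((2*(j:ℂ) - m) * ((α:ℂ) - ((k:ℂ) - 1) * (2 * (π:ℂ) / n)) * Complex.I) = 0 := by
            have hsplit : ∀ k : ℕ,
                Complex.exp ((2*(j:ℂ) - m) * ((α:ℂ) - ((k:ℂ) - 1) * (2 * (π:ℂ) / n)) * Complex.I)
                = Complex.exp ((2*(j:ℂ) - m) * (α:ℂ) * Complex.I)
                  * Complex.exp (((k:ℂ) - 1) * ((((m:ℤ) - 2*j : ℤ) : ℂ) * (2 * (π:ℂ) / n) * Complex.I)) := by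
              intro k
              rw [← Complex.exp_add]
              congr 1
              push_cast
              ring
            simp_rw [hsplit, ← Finset.mul_sum]
            rw [← Finset.Ico_add_one_right_eq_Icc, Finset.sum_Ico_eq_sum_range]
            have hsum : ∑ i ∈ Finset.range (n + 1 - 1),
                Complex.exp ((((1 + i : ℕ) : ℂ) - 1) * ((((m:ℤ) - 2*j : ℤ) : ℂ) * (2 * (π:ℂ) / n) * Complex.I)) = 0 := by
              have hm2 : m / 2 * 2 = m := Nat.div_mul_cancel heven.two_dvd
              have ht0 : ((m:ℤ) - 2*j) ≠ 0 := by omega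
              have htabs : ((m:ℤ) - 2*j).natAbs < n := by omega
              have haux := inner_sum_aux n hn ((m:ℤ) - 2*j) ht0 htabs
              rw [← haux]
              simp only [Nat.add_sub_cancel]
              refine Finset.sum_congr rfl fun i hi => ?_
              rw [← Complex.exp_nat_mul]
              congr 1
              push_cast
              ring
            rw [hsum, mul_zero]
          rw [hzero, zero_mul]
        · intro h
          exact absurd (Finset.mem_range.2 (Nat.lt_succ_of_le (Nat.div_le_self m 2))) h
end

section
/- Let P_1, P_2, P_3 be the vertices of an equilateral triangle with center O and circumradius r, and let X be a point at distance ℓ from O. Then Σ_{i=1}^3 dist(X, P_i)^4 = 3(r^4 + ℓ^4 + 4r^2ℓ^2). -/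
open Real Finset

lemma dist_sq_fin2 (x y : EuclideanSpace ℝ (Fin 2)) :
    dist x y ^ 2 = (x 0 - y 0) ^ 2 + (x 1 - y 1) ^ 2 := by
  rw [EuclideanSpace.dist_eq, Real.sq_sqrt (by positivity)]
  simp [Fin.sum_univ_two, Real.dist_eq, sq_abs]

theorem sum_pow4_dist_equilateral (O X : EuclideanSpace ℝ (Fin 2)) (r ℓ : ℝ)
    (P : ℕ → EuclideanSpace ℝ (Fin 2))
    (hP : ∀ k, P k = O + r • (WithLp.equiv 2 (Fin 2 → ℝ)).symm
      ![Real.cos (2 * k * π / 3), Real.sin (2 * k * π / 3)])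
    (hX : dist X O = ℓ) :
    ∑ k ∈ Finset.range 3, dist X (P k) ^ 4 = 3 * (r ^ 4 + ℓ ^ 4 + 4 * r ^ 2 * ℓ ^ 2) := by
  have hPk : ∀ k : ℕ, ∀ i : Fin 2,
      P k i = O i + r * ![Real.cos (2 * k * π / 3), Real.sin (2 * k * π / 3)] i := by
    intro k i
    rw [hP]
    simp [WithLp.equiv_symm_apply, PiLp.toLp_apply, PiLp.add_apply, PiLp.smul_apply, smul_eq_mul]
  have hℓ : (X 0 - O 0) ^ 2 + (X 1 - O 1) ^ 2 = ℓ ^ 2 := by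
    rw [← dist_sq_fin2, hX]
  have c0 : Real.cos (2 * (0:ℕ) * π / 3) = 1 := by norm_num
  have s0 : Real.sin (2 * (0:ℕ) * π / 3) = 0 := by norm_num
  have e1 : 2 * (1:ℕ) * π / 3 = π - π / 3 := by push_cast; ring
  have e2 : 2 * (2:ℕ) * π / 3 = π + π / 3 := by push_cast; ring
  have c1 : Real.cos (2 * (1:ℕ) * π / 3) = -(1/2) := by
    rw [e1, Real.cos_pi_sub, Real.cos_pi_div_three]
  have s1 : Real.sin (2 * (1:ℕ) * π / 3) = Real.sqrt 3 / 2 := by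
    rw [e1, Real.sin_pi_sub, Real.sin_pi_div_three]
  have c2 : Real.cos (2 * (2:ℕ) * π / 3) = -(1/2) := by
    rw [e2]; simp [Real.cos_add, Real.cos_pi_div_three]
  have s2 : Real.sin (2 * (2:ℕ) * π / 3) = -(Real.sqrt 3 / 2) := by
    rw [e2]; simp [Real.sin_add, Real.sin_pi_div_three]
  have h3 : Real.sqrt 3 ^ 2 = 3 := Real.sq_sqrt (by norm_num)
  have key : ∀ k : ℕ, dist X (P k) ^ 4 =
      ((X 0 - O 0 - r * Real.cos (2 * k * π / 3)) ^ 2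
        + (X 1 - O 1 - r * Real.sin (2 * k * π / 3)) ^ 2) ^ 2 := by
    intro k
    have : dist X (P k) ^ 4 = (dist X (P k) ^ 2) ^ 2 := by ring
    rw [this, dist_sq_fin2, hPk k 0, hPk k 1]
    simp only [Matrix.cons_val_zero, Matrix.cons_val_one, Matrix.head_cons]
    ring
  rw [Finset.sum_range_succ, Finset.sum_range_succ, Finset.sum_range_one,
    key 0, key 1, key 2, c0, s0, c1, s1, c2, s2]
  linear_combination (3*((X 0 - O 0)^2 + (X 1 - O 1)^2) + 3*ℓ^2 + 12*r^2) * hℓ +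
    (r^2*((X 0 - O 0)^2 + 3*(X 1 - O 1)^2 + r^2 + r*(X 0 - O 0)) +
      r^4*(Real.sqrt 3^2 - 3)/8) * h3
end

section
/- Let P_1, ..., P_4 be the vertices of a square with center O and circumradius r, and let X be a point at distance ℓ from O. Then Σ_{i=1}^4 dist(X, P_i)^6 = 4(r^2 + ℓ^2)(r^4 + ℓ^4 + 8r^2ℓ^2). -/
open Real Finset

theorem sum_pow6_dist_square (O X : EuclideanSpace ℝ (Fin 2)) (r ℓ φ : ℝ)
    (P : ℕ → EuclideanSpace ℝ (Fin 2))
    (hP : ∀ k, P k = O + r • (WithLp.equiv 2 (Fin 2 → ℝ)).symm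
      ![Real.cos (2 * k * π / 4 + φ), Real.sin (2 * k * π / 4 + φ)])
    (hX : dist X O = ℓ) :
    ∑ k ∈ Finset.range 4, dist X (P k) ^ 6 = 4 * (r ^ 2 + ℓ ^ 2) * (r ^ 4 + ℓ ^ 4 + 8 * r ^ 2 * ℓ ^ 2) := by
  have hsq : ∀ A B : EuclideanSpace ℝ (Fin 2), dist A B ^ 2 =
      (A 0 - B 0) ^ 2 + (A 1 - B 1) ^ 2 := by
    intro A B
    rw [EuclideanSpace.dist_eq, Real.sq_sqrt (Finset.sum_nonneg fun i _ => by positivity)]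
    simp [Fin.sum_univ_two, Real.dist_eq, sq_abs]
  have hd : ∀ k, dist X (P k) ^ 6 =
      ((X 0 - P k 0) ^ 2 + (X 1 - P k 1) ^ 2) ^ 3 := by
    intro k
    rw [show (6:ℕ) = 2*3 from rfl, pow_mul, hsq]
  have hℓ : (X 0 - O 0) ^ 2 + (X 1 - O 1) ^ 2 = ℓ ^ 2 := by
    rw [← hsq, hX]
  have hPk : ∀ k : ℕ, (P k 0 = O 0 + r * Real.cos (2 * k * π / 4 + φ)) ∧
      (P k 1 = O 1 + r * Real.sin (2 * k * π / 4 + φ)) := by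
    intro k
    rw [hP k]
    constructor <;> simp [PiLp.add_apply, PiLp.smul_apply]
  have a0 : 2 * ((0:ℕ):ℝ) * π / 4 + φ = φ := by push_cast; ring
  have a1 : 2 * ((1:ℕ):ℝ) * π / 4 + φ = π / 2 + φ := by push_cast; ring
  have a2 : 2 * ((2:ℕ):ℝ) * π / 4 + φ = π + φ := by push_cast; ring
  have a3 : 2 * ((3:ℕ):ℝ) * π / 4 + φ = π + (π / 2 + φ) := by push_cast; ring
  rw [Finset.sum_range_succ, Finset.sum_range_succ, Finset.sum_range_succ,
    Finset.sum_range_one, hd 0, hd 1, hd 2, hd 3,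
    (hPk 0).1, (hPk 0).2, (hPk 1).1, (hPk 1).2, (hPk 2).1, (hPk 2).2, (hPk 3).1, (hPk 3).2,
    a0, a1, a2, a3]
  simp only [Real.cos_add, Real.sin_add, Real.cos_pi, Real.sin_pi,
    Real.cos_pi_div_two, Real.sin_pi_div_two]
  have hc : Real.cos φ ^ 2 + Real.sin φ ^ 2 = 1 := Real.cos_sq_add_sin_sq φ
  set x := X 0 - O 0 with hx
  set y := X 1 - O 1 with hy
  set c := Real.cos φ
  set s := Real.sin φ
  ring_nf
  linear_combination (4*r^6 + 4*r^6*s^2 + 4*r^6*s^4 + 4*r^6*c^2 + 8*r^6*c^2*s^2 + 4*r^6*c^4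
      + 36*y^2*r^4 + 36*y^2*r^4*s^2 + 36*y^2*r^4*c^2 + 36*y^4*r^2 + 36*x^2*r^4
      + 36*x^2*r^4*s^2 + 36*x^2*r^4*c^2 + 72*x^2*y^2*r^2 + 36*x^4*r^2) * hc
    + (4*ℓ^4 + 36*r^2*ℓ^2 + 36*r^4 + 4*y^2*ℓ^2 + 36*y^2*r^2 + 4*y^4 + 4*x^2*ℓ^2
      + 36*x^2*r^2 + 8*x^2*y^2 + 4*x^4) * hℓ
end

section
/- Let P_1, ..., P_5 be the vertices of a regular pentagon with center O and circumradius r, and let X be a point at distance ℓ from O. Then Σ_{i=1}^5 dist(X, P_i)^4 = 5(r^4 + ℓ^4 + 4r^2ℓ^2). -/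
open Real Finset

lemma sum_exp_five (m : ℕ) (hm : 0 < m) (hm5 : m < 5) (φ : ℝ) :
    ∑ k ∈ Finset.range 5, Complex.exp ((↑((m : ℝ) * (2 * k * π / 5 + φ)) : ℂ) * Complex.I) = 0 := by
  set z : ℂ := Complex.exp (((2 * π * m / 5 : ℝ) : ℂ) * Complex.I) with hz
  have hzk : ∀ k : ℕ, Complex.exp ((↑((m : ℝ) * (2 * k * π / 5 + φ)) : ℂ) * Complex.I)
      = Complex.exp ((((m : ℝ) * φ : ℝ) : ℂ) * Complex.I) * z ^ k := by
    intro k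
    rw [hz, ← Complex.exp_nat_mul, ← Complex.exp_add]
    congr 1
    push_cast
    ring
  simp only [hzk, ← Finset.mul_sum]
  have hz5 : z ^ 5 = 1 := by
    rw [hz, ← Complex.exp_nat_mul]
    rw [show ((5 : ℕ) : ℂ) * ((((2 * π * m / 5 : ℝ)) : ℂ) * Complex.I) = (m : ℂ) * (2 * π * Complex.I) by push_cast; ring]
    exact_mod_cast Complex.exp_nat_mul_two_pi_mul_I m
  have hz1 : z ≠ 1 := by
    rw [hz, Ne, Complex.exp_eq_one_iff]
    rintro ⟨n, hn⟩
    have him := congrArg Complex.im hn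
    simp at him
    have hπ := Real.pi_ne_zero
    have hmn : (m : ℝ) = 5 * n := by field_simp at him; nlinarith [Real.pi_pos]
    have : (m : ℤ) = 5 * n := by exact_mod_cast hmn
    omega
  have hgeom : ∑ k ∈ Finset.range 5, z ^ k = 0 := by
    rw [geom_sum_eq hz1 5, hz5, sub_self, zero_div]
  rw [hgeom, mul_zero]

lemma sum_cos_five (m : ℕ) (hm : 0 < m) (hm5 : m < 5) (φ : ℝ) :
    ∑ k ∈ Finset.range 5, Real.cos ((m : ℝ) * (2 * k * π / 5 + φ)) = 0 := by
  have h := congrArg Complex.re (sum_exp_five m hm hm5 φ)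
  simp only [Complex.re_sum, Complex.exp_ofReal_mul_I_re] at h
  simpa using h

lemma sum_sin_five (m : ℕ) (hm : 0 < m) (hm5 : m < 5) (φ : ℝ) :
    ∑ k ∈ Finset.range 5, Real.sin ((m : ℝ) * (2 * k * π / 5 + φ)) = 0 := by
  have h := congrArg Complex.im (sum_exp_five m hm hm5 φ)
  simp only [Complex.im_sum, Complex.exp_ofReal_mul_I_im] at h
  simpa using h

theorem sum_pow4_dist_pentagon (O X : EuclideanSpace ℝ (Fin 2)) (r ℓ φ : ℝ)
    (P : ℕ → EuclideanSpace ℝ (Fin 2))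
    (hP : ∀ k, P k = O + r • (WithLp.equiv 2 (Fin 2 → ℝ)).symm
      ![Real.cos (2 * k * π / 5 + φ), Real.sin (2 * k * π / 5 + φ)])
    (hX : dist X O = ℓ) :
    ∑ k ∈ Finset.range 5, dist X (P k) ^ 4 = 5 * (r ^ 4 + ℓ ^ 4 + 4 * r ^ 2 * ℓ ^ 2) := by
  set a : ℝ := X 0 - O 0 with ha
  set b : ℝ := X 1 - O 1 with hb
  have hl : a ^ 2 + b ^ 2 = ℓ ^ 2 := by
    have h1 : dist X O ^ 2 = ∑ i, dist (X i) (O i) ^ 2 := by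
      rw [EuclideanSpace.dist_eq, Real.sq_sqrt (by positivity)]
    rw [Fin.sum_univ_two] at h1
    simp only [Real.dist_eq, sq_abs] at h1
    rw [← hX, h1]
  have hPk0 : ∀ k : ℕ, P k 0 = O 0 + r * Real.cos (2 * k * π / 5 + φ) := by
    intro k; rw [hP k]; simp
  have hPk1 : ∀ k : ℕ, P k 1 = O 1 + r * Real.sin (2 * k * π / 5 + φ) := by
    intro k; rw [hP k]; simp
  have key : ∀ k : ℕ, dist X (P k) ^ 4 =
      ((ℓ ^ 2 + r ^ 2) ^ 2 + 2 * r ^ 2 * ℓ ^ 2)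
      - 4 * r * (ℓ ^ 2 + r ^ 2) * a * Real.cos (2 * k * π / 5 + φ)
      - 4 * r * (ℓ ^ 2 + r ^ 2) * b * Real.sin (2 * k * π / 5 + φ)
      + 2 * r ^ 2 * (a ^ 2 - b ^ 2) * Real.cos (2 * (2 * k * π / 5 + φ))
      + 4 * r ^ 2 * a * b * Real.sin (2 * (2 * k * π / 5 + φ)) := by
    intro k
    have hd : dist X (P k) ^ 2 = (X 0 - P k 0) ^ 2 + (X 1 - P k 1) ^ 2 := by
      rw [EuclideanSpace.dist_eq, Real.sq_sqrt (by positivity), Fin.sum_univ_two]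
      simp [Real.dist_eq, sq_abs]
    have h4 : dist X (P k) ^ 4 = (dist X (P k) ^ 2) ^ 2 := by ring
    rw [h4, hd, hPk0 k, hPk1 k, Real.cos_two_mul, Real.sin_two_mul]
    set c := Real.cos (2 * k * π / 5 + φ)
    set s := Real.sin (2 * k * π / 5 + φ)
    have h1 : c ^ 2 + s ^ 2 = 1 := by
      rw [add_comm]; exact Real.sin_sq_add_cos_sq _
    linear_combination (r^2*(2*(a^2+b^2) - 4*r*(a*c+b*s) + r^2*(c^2+s^2) + r^2) + 4*r^2*b^2) * h1
      + (ℓ^2 + a^2 + b^2 + 4*r^2 - 4*r*(a*c+b*s)) * hl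
  have hc1 : ∑ k ∈ Finset.range 5, Real.cos (2 * k * π / 5 + φ) = 0 := by
    have := sum_cos_five 1 one_pos (by norm_num) φ
    simpa using this
  have hs1 : ∑ k ∈ Finset.range 5, Real.sin (2 * k * π / 5 + φ) = 0 := by
    have := sum_sin_five 1 one_pos (by norm_num) φ
    simpa using this
  have hc2 : ∑ k ∈ Finset.range 5, Real.cos (2 * (2 * k * π / 5 + φ)) = 0 := by
    have := sum_cos_five 2 two_pos (by norm_num) φ
    simpa using this
  have hs2 : ∑ k ∈ Finset.range 5, Real.sin (2 * (2 * k * π / 5 + φ)) = 0 := by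
    have := sum_sin_five 2 two_pos (by norm_num) φ
    simpa using this
  rw [Finset.sum_congr rfl (fun k _ => key k)]
  simp only [Finset.sum_add_distrib, Finset.sum_sub_distrib, ← Finset.mul_sum, hc1, hs1, hc2, hs2,
    Finset.sum_const, Finset.card_range, mul_zero, sub_zero, add_zero, nsmul_eq_mul]
  push_cast
  ring
end

section
/- Let P_1, ..., P_5 be the vertices of a regular pentagon with center O and circumradius r, and let X be a point at distance ℓ from O. Then Σ_{i=1}^5 dist(X, P_i)^6 = 5(r^2 + ℓ^2)(r^4 + ℓ^4 + 8r^2ℓ^2). -/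
open Real Finset

private lemma geom_key (z w : ℂ) (hz5 : z^5 = 1) (hzn : z ≠ 1) :
    ∑ k ∈ range 5, w * z^k = 0 := by
  rw [← mul_sum, geom_sum_eq hzn, hz5]
  simp

private lemma exp_five : Complex.exp ((2*π/5) * Complex.I) ^ 5 = 1 := by
  rw [← Complex.exp_nat_mul]
  push_cast
  rw [show (5:ℂ) * (2*π/5*Complex.I) = 2*π*Complex.I by ring, Complex.exp_two_pi_mul_I]

private lemma exp_pow_ne_one (n : ℕ) (hn : 0 < n) (h5 : n < 5) :
    Complex.exp ((2*π/5) * Complex.I) ^ n ≠ 1 := by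
  rw [← Complex.exp_nat_mul]
  intro h
  rw [Complex.exp_eq_one_iff] at h
  obtain ⟨m, hm⟩ := h
  have h2 : (((n:ℝ)*(2*π/5) - m*(2*π) : ℝ) : ℂ) * Complex.I = 0 := by
    push_cast
    linear_combination hm
  have h3 : (((n:ℝ)*(2*π/5) - m*(2*π) : ℝ) : ℂ) = 0 :=
    (mul_eq_zero.mp h2).resolve_right Complex.I_ne_zero
  have h4 : (n:ℝ)*(2*π/5) - m*(2*π) = 0 := by exact_mod_cast h3
  have h6 : ((n:ℝ) - 5*m) * π = 0 * π := by linear_combination (5:ℝ)/2 * h4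
  have h7 : (n:ℝ) - 5*m = 0 := mul_right_cancel₀ Real.pi_ne_zero h6
  have h8 : (n:ℤ) = 5 * m := by exact_mod_cast sub_eq_zero.mp h7
  omega

private lemma moment (φ : ℝ) (n : ℕ) (hn : 0 < n) (h5 : n < 5) :
    ∑ k ∈ range 5,
      ((Real.cos (2*k*π/5 + φ) : ℂ) + (Real.sin (2*k*π/5 + φ) : ℂ) * Complex.I)^n = 0 := by
  have hz : ∀ k : ℕ, ((Real.cos (2*k*π/5 + φ) : ℂ) + (Real.sin (2*k*π/5 + φ) : ℂ) * Complex.I)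
      = Complex.exp (φ*Complex.I) * Complex.exp ((2*π/5)*Complex.I)^k := by
    intro k
    rw [Complex.ofReal_cos, Complex.ofReal_sin, ← Complex.exp_mul_I, ← Complex.exp_nat_mul,
      ← Complex.exp_add]
    congr 1
    push_cast
    ring
  calc ∑ k ∈ range 5, ((Real.cos (2*k*π/5 + φ) : ℂ) + (Real.sin (2*k*π/5 + φ) : ℂ) * Complex.I)^n
      = ∑ k ∈ range 5, (Complex.exp (φ*Complex.I))^n * (Complex.exp ((2*π/5)*Complex.I)^n)^k := by
        refine Finset.sum_congr rfl fun k _ => ?_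
        rw [hz k, mul_pow, ← pow_mul, ← pow_mul', Nat.mul_comm]
    _ = 0 := geom_key _ _ (by rw [← pow_mul, Nat.mul_comm, pow_mul, exp_five, one_pow])
        (exp_pow_ne_one n hn h5)

private lemma split_zero (x y : ℝ) (h : (x:ℂ) + (y:ℂ)*Complex.I = 0) : x = 0 ∧ y = 0 := by
  simpa [Complex.ext_iff] using h

private lemma pentagon_moments (φ : ℝ) :
    (∑ k ∈ range 5, Real.cos (2*k*π/5 + φ) = 0) ∧
    (∑ k ∈ range 5, Real.sin (2*k*π/5 + φ) = 0) ∧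
    (∑ k ∈ range 5, (Real.cos (2*k*π/5 + φ)^2 - Real.sin (2*k*π/5 + φ)^2) = 0) ∧
    (∑ k ∈ range 5, Real.cos (2*k*π/5 + φ) * Real.sin (2*k*π/5 + φ) = 0) ∧
    (∑ k ∈ range 5, (Real.cos (2*k*π/5 + φ)^3
        - 3*Real.cos (2*k*π/5 + φ)*Real.sin (2*k*π/5 + φ)^2) = 0) ∧
    (∑ k ∈ range 5, (3*Real.cos (2*k*π/5 + φ)^2*Real.sin (2*k*π/5 + φ)
        - Real.sin (2*k*π/5 + φ)^3) = 0) := by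
  have M1 := moment φ 1 (by norm_num) (by norm_num)
  have M2 := moment φ 2 (by norm_num) (by norm_num)
  have M3 := moment φ 3 (by norm_num) (by norm_num)
  have E1 : ((∑ k ∈ range 5, Real.cos (2*k*π/5 + φ) : ℝ) : ℂ)
      + ((∑ k ∈ range 5, Real.sin (2*k*π/5 + φ) : ℝ) : ℂ) * Complex.I = 0 := by
    rw [← M1]
    push_cast
    rw [Finset.sum_mul, ← Finset.sum_add_distrib]
    exact Finset.sum_congr rfl fun k _ => by ring
  have E2 : ((∑ k ∈ range 5, (Real.cos (2*k*π/5 + φ)^2 - Real.sin (2*k*π/5 + φ)^2) : ℝ) : ℂ)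
      + ((∑ k ∈ range 5, (2*Real.cos (2*k*π/5 + φ)*Real.sin (2*k*π/5 + φ)) : ℝ) : ℂ)
        * Complex.I = 0 := by
    rw [← M2]
    push_cast
    rw [Finset.sum_mul, ← Finset.sum_add_distrib]
    refine Finset.sum_congr rfl fun k _ => ?_
    linear_combination (-((Complex.sin (2*(k:ℂ)*(π:ℂ)/5+(φ:ℂ)))^2)) * Complex.I_sq
  have E3 : ((∑ k ∈ range 5, (Real.cos (2*k*π/5 + φ)^3
        - 3*Real.cos (2*k*π/5 + φ)*Real.sin (2*k*π/5 + φ)^2) : ℝ) : ℂ)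
      + ((∑ k ∈ range 5, (3*Real.cos (2*k*π/5 + φ)^2*Real.sin (2*k*π/5 + φ)
        - Real.sin (2*k*π/5 + φ)^3) : ℝ) : ℂ) * Complex.I = 0 := by
    rw [← M3]
    push_cast
    rw [Finset.sum_mul, ← Finset.sum_add_distrib]
    refine Finset.sum_congr rfl fun k _ => ?_
    linear_combination (-1)*(3*Complex.cos (2*(k:ℂ)*(π:ℂ)/5+(φ:ℂ))*Complex.sin (2*(k:ℂ)*(π:ℂ)/5+(φ:ℂ))^2
      + Complex.sin (2*(k:ℂ)*(π:ℂ)/5+(φ:ℂ))^3*Complex.I) * Complex.I_sq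
  obtain ⟨a1, a2⟩ := split_zero _ _ E1
  obtain ⟨a3, a4⟩ := split_zero _ _ E2
  obtain ⟨a5, a6⟩ := split_zero _ _ E3
  refine ⟨a1, a2, a3, ?_, a5, a6⟩
  have : (2:ℝ) * ∑ k ∈ range 5, Real.cos (2*k*π/5 + φ) * Real.sin (2*k*π/5 + φ) = 0 := by
    rw [Finset.mul_sum] at *
    rw [← a4]
    exact Finset.sum_congr rfl fun k _ => by ring
  linarith

private lemma alg (a b r ℓ c0 c1 c2 c3 c4 s0 s1 s2 s3 s4 : ℝ)
    (hp0 : c0^2+s0^2=1) (hp1 : c1^2+s1^2=1) (hp2 : c2^2+s2^2=1)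
    (hp3 : c3^2+s3^2=1) (hp4 : c4^2+s4^2=1)
    (h1 : c0+c1+c2+c3+c4 = 0) (h2 : s0+s1+s2+s3+s4 = 0)
    (h3 : (c0^2-s0^2)+(c1^2-s1^2)+(c2^2-s2^2)+(c3^2-s3^2)+(c4^2-s4^2) = 0)
    (h4 : c0*s0+c1*s1+c2*s2+c3*s3+c4*s4 = 0)
    (h5 : (c0^3-3*c0*s0^2)+(c1^3-3*c1*s1^2)+(c2^3-3*c2*s2^2)
        +(c3^3-3*c3*s3^2)+(c4^3-3*c4*s4^2) = 0)
    (h6 : (3*c0^2*s0-s0^3)+(3*c1^2*s1-s1^3)+(3*c2^2*s2-s2^3)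
        +(3*c3^2*s3-s3^3)+(3*c4^2*s4-s4^3) = 0)
    (hl : a^2+b^2 = ℓ^2) :
    ((a-r*c0)^2+(b-r*s0)^2)^3 + ((a-r*c1)^2+(b-r*s1)^2)^3 + ((a-r*c2)^2+(b-r*s2)^2)^3
      + ((a-r*c3)^2+(b-r*s3)^2)^3 + ((a-r*c4)^2+(b-r*s4)^2)^3
      = 5*(r^2+ℓ^2)*(r^4+ℓ^4+8*r^2*ℓ^2) := by
  have hc2 : c0^2+c1^2+c2^2+c3^2+c4^2 = 5/2 := by linarith
  have hs2 : s0^2+s1^2+s2^2+s3^2+s4^2 = 5/2 := by linarith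
  have m30 : c0^3+c1^3+c2^3+c3^3+c4^3 = 0 := by
    linear_combination (1/4)*h5 + (3/4)*(c0*hp0+c1*hp1+c2*hp2+c3*hp3+c4*hp4) + (3/4)*h1
  have m12 : c0*s0^2+c1*s1^2+c2*s2^2+c3*s3^2+c4*s4^2 = 0 := by
    linear_combination (1/3)*m30 - (1/3)*h5
  have m03 : s0^3+s1^3+s2^3+s3^3+s4^3 = 0 := by
    linear_combination (-(1/4))*h6 + (3/4)*(s0*hp0+s1*hp1+s2*hp2+s3*hp3+s4*hp4) + (3/4)*h2
  have m21 : c0^2*s0+c1^2*s1+c2^2*s2+c3^2*s3+c4^2*s4 = 0 := by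
    linear_combination (1/3)*h6 + (1/3)*m03
  have e0 : (a-r*c0)^2+(b-r*s0)^2 = (a^2+b^2+r^2) - 2*r*(a*c0+b*s0) := by
    linear_combination r^2*hp0
  have e1 : (a-r*c1)^2+(b-r*s1)^2 = (a^2+b^2+r^2) - 2*r*(a*c1+b*s1) := by
    linear_combination r^2*hp1
  have e2 : (a-r*c2)^2+(b-r*s2)^2 = (a^2+b^2+r^2) - 2*r*(a*c2+b*s2) := by
    linear_combination r^2*hp2
  have e3 : (a-r*c3)^2+(b-r*s3)^2 = (a^2+b^2+r^2) - 2*r*(a*c3+b*s3) := by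
    linear_combination r^2*hp3
  have e4 : (a-r*c4)^2+(b-r*s4)^2 = (a^2+b^2+r^2) - 2*r*(a*c4+b*s4) := by
    linear_combination r^2*hp4
  rw [e0, e1, e2, e3, e4]
  linear_combination
    (-6*(a^2+b^2+r^2)^2*r)*(a*h1 + b*h2)
    + 12*(a^2+b^2+r^2)*r^2*(a^2*hc2 + 2*a*b*h4 + b^2*hs2)
    - 8*r^3*(a^3*m30 + 3*a^2*b*m21 + 3*a*b^2*m12 + b^3*m03)
    + (5*(9*r^4 + 9*r^2*((a^2+b^2)+ℓ^2) + ((a^2+b^2)^2 + (a^2+b^2)*ℓ^2 + ℓ^4)))*hl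

theorem sum_pow6_dist_pentagon (O X : EuclideanSpace ℝ (Fin 2)) (r ℓ φ : ℝ)
    (P : ℕ → EuclideanSpace ℝ (Fin 2))
    (hP : ∀ k, P k = O + r • (WithLp.equiv 2 (Fin 2 → ℝ)).symm
      ![Real.cos (2 * k * π / 5 + φ), Real.sin (2 * k * π / 5 + φ)])
    (hX : dist X O = ℓ) :
    ∑ k ∈ Finset.range 5, dist X (P k) ^ 6 = 5 * (r ^ 2 + ℓ ^ 2) * (r ^ 4 + ℓ ^ 4 + 8 * r ^ 2 * ℓ ^ 2) := by
  obtain ⟨h1, h2, h3, h4, h5, h6⟩ := pentagon_moments φ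
  have hθ0 : Real.cos (2*(0:ℝ)*π/5+φ)^2 + Real.sin (2*(0:ℝ)*π/5+φ)^2 = 1 :=
    Real.cos_sq_add_sin_sq _
  have hθ1 : Real.cos (2*(1:ℝ)*π/5+φ)^2 + Real.sin (2*(1:ℝ)*π/5+φ)^2 = 1 :=
    Real.cos_sq_add_sin_sq _
  have hθ2 : Real.cos (2*(2:ℝ)*π/5+φ)^2 + Real.sin (2*(2:ℝ)*π/5+φ)^2 = 1 :=
    Real.cos_sq_add_sin_sq _
  have hθ3 : Real.cos (2*(3:ℝ)*π/5+φ)^2 + Real.sin (2*(3:ℝ)*π/5+φ)^2 = 1 :=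
    Real.cos_sq_add_sin_sq _
  have hθ4 : Real.cos (2*(4:ℝ)*π/5+φ)^2 + Real.sin (2*(4:ℝ)*π/5+φ)^2 = 1 :=
    Real.cos_sq_add_sin_sq _
  have hl : (X 0 - O 0)^2 + (X 1 - O 1)^2 = ℓ^2 := by
    have hd : dist X O ^ 2 = (X 0 - O 0)^2 + (X 1 - O 1)^2 := by
      rw [EuclideanSpace.dist_eq, Real.sq_sqrt (by positivity)]
      simp [Fin.sum_univ_two, Real.dist_eq, sq_abs]
    rw [← hd, hX]
  have key : ∀ k : ℕ, dist X (P k) ^ 6 =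
      (((X 0 - O 0) - r*Real.cos (2*k*π/5+φ))^2
        + ((X 1 - O 1) - r*Real.sin (2*k*π/5+φ))^2)^3 := by
    intro k
    have hd : dist X (P k) ^ 2 = (X 0 - P k 0)^2 + (X 1 - P k 1)^2 := by
      rw [EuclideanSpace.dist_eq, Real.sq_sqrt (by positivity)]
      simp [Fin.sum_univ_two, Real.dist_eq, sq_abs]
    have e0 : P k 0 = O 0 + r * Real.cos (2*k*π/5+φ) := by rw [hP k]; simp
    have e1 : P k 1 = O 1 + r * Real.sin (2*k*π/5+φ) := by rw [hP k]; simp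
    calc dist X (P k) ^ 6 = (dist X (P k) ^ 2)^3 := by ring
    _ = _ := by rw [hd, e0, e1]; ring
  rw [Finset.sum_congr rfl fun k _ => key k]
  simp only [Finset.sum_range_succ, Finset.sum_range_zero, zero_add, Nat.cast_zero,
    Nat.cast_one, Nat.cast_ofNat] at h1 h2 h3 h4 h5 h6 ⊢
  exact alg _ _ r ℓ _ _ _ _ _ _ _ _ _ _ hθ0 hθ1 hθ2 hθ3 hθ4 h1 h2 h3 h4 h5 h6 hl
end

section
/- Let P_1, ..., P_5 be the vertices of a regular pentagon with center O and circumradius r, and let X be a point at distance ℓ from O. Then Σ_{i=1}^5 dist(X, P_i)^8 = 5(r^2 + ℓ^2)^2(r^4 + ℓ^4 + 14r^2ℓ^2) + 30 r^4 ℓ^4. -/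
open Real Finset

lemma sum_cos_eq_zero (m : ℕ) (h1 : 1 ≤ m) (h4 : m ≤ 4) (c : ℝ) :
    ∑ k ∈ Finset.range 5, Real.cos (2*π*m*k/5 + c) = 0 := by
  have key : ∀ k : ℕ, Real.cos (2*π*m*k/5 + c) =
      (Complex.exp ((c:ℝ) * Complex.I) * Complex.exp (((2*π*m/5 : ℝ)) * Complex.I) ^ k).re := by
    intro k
    rw [← Complex.exp_nat_mul, ← Complex.exp_add]
    have : (c:ℂ) * Complex.I + k * (((2*π*m/5 : ℝ) : ℂ) * Complex.I) = ((2*π*m*k/5 + c : ℝ) : ℂ) * Complex.I := by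
      push_cast; ring
    rw [this, Complex.exp_ofReal_mul_I_re]
  simp only [key, ← Complex.re_sum]
  rw [← Finset.mul_sum]
  have hz5 : Complex.exp (((2*π*m/5 : ℝ)) * Complex.I) ^ 5 = 1 := by
    rw [← Complex.exp_nat_mul]
    have : ((5:ℕ):ℂ) * (((2*π*m/5 : ℝ) : ℂ) * Complex.I) = (m:ℤ) * (2 * π * Complex.I) := by
      push_cast; ring
    rw [this, Complex.exp_int_mul_two_pi_mul_I]
  have hz1 : Complex.exp (((2*π*m/5 : ℝ)) * Complex.I) ≠ 1 := by
    rw [Ne, Complex.exp_eq_one_iff]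
    rintro ⟨n, hn⟩
    have him : (2*π*m/5 : ℝ) = n * (2*π) := by
      have := congrArg Complex.im hn
      simpa using this
    have hm : (m : ℝ) = 5 * n := by
      field_simp at him
      nlinarith [Real.pi_pos, him]
    have : (m : ℤ) = 5 * n := by exact_mod_cast hm
    omega
  have : ∑ k ∈ Finset.range 5, Complex.exp (((2*π*m/5 : ℝ)) * Complex.I) ^ k = 0 := by
    have := geom_sum_eq hz1 5
    rw [this, hz5]
    simp
  rw [this, mul_zero, Complex.zero_re]

lemma pow4_expand (A B β : ℝ) : (A - B*Real.cos β)^4 =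
    (A^4 + 3*A^2*B^2 + 3*B^4/8) + (-4*A^3*B - 3*A*B^3)*Real.cos β
    + (3*A^2*B^2 + B^4/2)*Real.cos (2*β) + (-(A*B^3))*Real.cos (3*β)
    + (B^4/8)*Real.cos (4*β) := by
  have h2 := Real.cos_two_mul β
  have h3 := Real.cos_three_mul β
  have h4 : Real.cos (4*β) = 2 * Real.cos (2*β)^2 - 1 := by
    have := Real.cos_two_mul (2*β); rw [show 2*(2*β) = 4*β by ring] at this; exact this
  rw [h4, h3, h2]; ring


theorem sum_pow8_dist_pentagon (O X : EuclideanSpace ℝ (Fin 2)) (r ℓ φ : ℝ)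
    (P : ℕ → EuclideanSpace ℝ (Fin 2))
    (hP : ∀ k, P k = O + r • (WithLp.equiv 2 (Fin 2 → ℝ)).symm
      ![Real.cos (2 * k * π / 5 + φ), Real.sin (2 * k * π / 5 + φ)])
    (hX : dist X O = ℓ) :
    ∑ k ∈ Finset.range 5, dist X (P k) ^ 8 = 5 * (r ^ 2 + ℓ ^ 2) ^ 2 * (r ^ 4 + ℓ ^ 4 + 14 * r ^ 2 * ℓ ^ 2) + 30 * r ^ 4 * ℓ ^ 4 := by
  have hd : ∀ Y : EuclideanSpace ℝ (Fin 2), dist X Y ^ 2 = (X 0 - Y 0)^2 + (X 1 - Y 1)^2 := by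
    intro Y
    rw [EuclideanSpace.dist_eq, Real.sq_sqrt (by positivity)]
    simp [Fin.sum_univ_two, Real.dist_eq, sq_abs]
  have hl0 : 0 ≤ ℓ := hX ▸ dist_nonneg
  have hxy : (X 0 - O 0)^2 + (X 1 - O 1)^2 = ℓ^2 := by
    rw [← hd O, hX]
  -- polar coordinates
  obtain ⟨ψ, hx, hy⟩ : ∃ ψ : ℝ, X 0 - O 0 = ℓ * Real.cos ψ ∧ X 1 - O 1 = ℓ * Real.sin ψ := by
    rcases eq_or_lt_of_le hl0 with h | h
    · subst h
      refine ⟨0, ?_, ?_⟩ <;>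
      · simp only [Real.cos_zero, Real.sin_zero, zero_mul, mul_one, mul_zero]
        nlinarith [sq_nonneg (X 0 - O 0), sq_nonneg (X 1 - O 1), hxy]
    · set z : ℂ := ⟨X 0 - O 0, X 1 - O 1⟩ with hz
      have habs : ‖z‖ = ℓ := by
        have h1 : ‖z‖^2 = ℓ^2 := by
          rw [Complex.sq_norm, Complex.normSq_mk]; nlinarith [hxy]
        nlinarith [norm_nonneg z]
      have hz0 : z ≠ 0 := by
        intro h0
        rw [h0, norm_zero] at habs
        exact absurd habs.symm (ne_of_gt h)
      refine ⟨Complex.arg z, ?_, ?_⟩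
      · have := Complex.cos_arg hz0
        rw [habs] at this
        field_simp at this
        simpa [hz, mul_comm] using this.symm
      · have := Complex.sin_arg z
        rw [habs] at this
        field_simp at this
        simpa [hz, mul_comm] using this.symm
  have hdist2 : ∀ k : ℕ, dist X (P k) ^ 2 =
      (ℓ^2 + r^2) - (2*r*ℓ) * Real.cos (2*k*π/5 + (φ - ψ)) := by
    intro k
    rw [hd (P k), hP k]
    simp only [PiLp.add_apply, PiLp.smul_apply, smul_eq_mul, WithLp.equiv_symm_apply, PiLp.toLp_apply,
      Matrix.cons_val_zero, Matrix.cons_val_one, Matrix.head_cons]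
    rw [show (2*(k:ℝ)*π/5 + (φ - ψ)) = (2*k*π/5 + φ) - ψ by ring, Real.cos_sub]
    have hc := Real.sin_sq_add_cos_sq (2*(k:ℝ)*π/5 + φ)
    linear_combination hxy + r^2*hc + (-2*r*Real.cos (2*(k:ℝ)*π/5 + φ))*hx
      + (-2*r*Real.sin (2*(k:ℝ)*π/5 + φ))*hy
  have S : ∀ m : ℕ, 1 ≤ m → m ≤ 4 →
      ∑ k ∈ Finset.range 5, Real.cos ((m:ℝ) * (2*k*π/5 + (φ - ψ))) = 0 := by
    intro m h1 h4
    rw [← sum_cos_eq_zero m h1 h4 (m*(φ - ψ))]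
    refine Finset.sum_congr rfl fun k _ => ?_
    congr 1; push_cast; ring
  have S1 : ∑ k ∈ Finset.range 5, Real.cos (2*(k:ℝ)*π/5 + (φ - ψ)) = 0 := by
    have := S 1 (by norm_num) (by norm_num)
    push_cast at this
    simpa using this
  have S2 : ∑ k ∈ Finset.range 5, Real.cos (2*(2*(k:ℝ)*π/5 + (φ - ψ))) = 0 := by
    have := S 2 (by norm_num) (by norm_num); push_cast at this; exact this
  have S3 : ∑ k ∈ Finset.range 5, Real.cos (3*(2*(k:ℝ)*π/5 + (φ - ψ))) = 0 := by
    have := S 3 (by norm_num) (by norm_num); push_cast at this; exact this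
  have S4 : ∑ k ∈ Finset.range 5, Real.cos (4*(2*(k:ℝ)*π/5 + (φ - ψ))) = 0 := by
    have := S 4 (by norm_num) (by norm_num); push_cast at this; exact this
  have hd8 : ∀ k : ℕ, dist X (P k) ^ 8 =
      ((ℓ^2+r^2)^4 + 3*(ℓ^2+r^2)^2*(2*r*ℓ)^2 + 3*(2*r*ℓ)^4/8)
      + (-4*(ℓ^2+r^2)^3*(2*r*ℓ) - 3*(ℓ^2+r^2)*(2*r*ℓ)^3)*Real.cos (2*(k:ℝ)*π/5 + (φ - ψ))
      + (3*(ℓ^2+r^2)^2*(2*r*ℓ)^2 + (2*r*ℓ)^4/2)*Real.cos (2*(2*(k:ℝ)*π/5 + (φ - ψ)))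
      + (-((ℓ^2+r^2)*(2*r*ℓ)^3))*Real.cos (3*(2*(k:ℝ)*π/5 + (φ - ψ)))
      + ((2*r*ℓ)^4/8)*Real.cos (4*(2*(k:ℝ)*π/5 + (φ - ψ))) := by
    intro k
    have : dist X (P k) ^ 8 = (dist X (P k) ^ 2) ^ 4 := by ring
    rw [this, hdist2 k, show (ℓ^2 + r^2) - (2*r*ℓ) * Real.cos (2*(k:ℝ)*π/5 + (φ - ψ))
      = (ℓ^2+r^2) - (2*r*ℓ)*Real.cos (2*(k:ℝ)*π/5 + (φ - ψ)) from rfl]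
    exact pow4_expand (ℓ^2+r^2) (2*r*ℓ) (2*(k:ℝ)*π/5 + (φ - ψ))
  rw [Finset.sum_congr rfl fun k _ => hd8 k]
  simp only [Finset.sum_add_distrib, ← Finset.mul_sum, S1, S2, S3, S4, mul_zero, add_zero,
    Finset.sum_const, Finset.card_range, nsmul_eq_mul]
  ring
end

section
/- Let n ≥ 2 and 1 ≤ m ≤ n-1. Let P_1, ..., P_n be the vertices of a regular n-gon with center O and circumradius r, and let X be a point at distance ℓ from O. Then Σ_{i=1}^n dist(X, P_i)^{2m} = n·[ (r^2+ℓ^2)^m + Σ_{k=1}^{⌊m/2⌋} (m choose 2k)·(r^2+ℓ^2)^{m-2k}·(rℓ)^{2k}·(2k choose k) ]. -/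
open Real Finset

lemma sum_exp_pow (n : ℕ) (k : ℤ) (hk : k ≠ 0) (hk' : k.natAbs < n) :
    ∑ i ∈ Finset.range n, Complex.exp (2 * π * k / n * Complex.I) ^ i = 0 := by
  have hn0 : (n:ℂ) ≠ 0 := by
    exact_mod_cast Nat.cast_ne_zero.2 (by omega)
  have h2πI : (2 * (π:ℂ) * Complex.I) ≠ 0 :=
    mul_ne_zero (mul_ne_zero two_ne_zero (Complex.ofReal_ne_zero.2 Real.pi_ne_zero))
      Complex.I_ne_zero
  have hz1 : Complex.exp (2 * π * k / n * Complex.I) ≠ 1 := by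
    intro hone
    rw [Complex.exp_eq_one_iff] at hone
    obtain ⟨t, ht⟩ := hone
    have h2 : (k:ℂ) * (2 * π * Complex.I) = ((t * n : ℤ):ℂ) * (2 * π * Complex.I) := by
      push_cast
      field_simp at ht
      linear_combination (2 * π * Complex.I) * ht
    have h3 : k = t * n := by exact_mod_cast mul_right_cancel₀ h2πI h2
    have ht0 : t ≠ 0 := by rintro rfl; simp at h3; omega
    have : k.natAbs = t.natAbs * n := by rw [h3, Int.natAbs_mul]; simp
    have : 1 ≤ t.natAbs := by omega
    nlinarith [hk', this]
  rw [geom_sum_eq hz1]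
  have hpow : Complex.exp (2 * π * k / n * Complex.I) ^ n = 1 := by
    rw [← Complex.exp_nat_mul]
    have : (n:ℂ) * (2 * π * k / n * Complex.I) = k * (2 * π * Complex.I) := by
      field_simp
    rw [this, Complex.exp_int_mul_two_pi_mul_I]
  rw [hpow]; simp

lemma sum_exp_eq (n : ℕ) (hn : 0 < n) (k : ℤ) (hk : k.natAbs < n) (c : ℝ) :
    ∑ i ∈ Finset.range n, Complex.exp ((k * (2 * π * i / n + c) : ℝ) * Complex.I)
      = if k = 0 then (n : ℂ) else 0 := by
  have hn0 : (n:ℂ) ≠ 0 := by exact_mod_cast Nat.cast_ne_zero.2 (by omega)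
  have key : ∀ i : ℕ, ((k * (2 * π * i / n + c) : ℝ) : ℂ) * Complex.I
      = (k*c:ℝ) * Complex.I + i * (2 * π * k / n * Complex.I) := by
    intro i; push_cast; field_simp; ring
  simp_rw [key, Complex.exp_add, Complex.exp_nat_mul, ← Finset.mul_sum]
  by_cases hk0 : k = 0
  · subst hk0; simp
  · rw [if_neg hk0, sum_exp_pow n k hk0 hk, mul_zero]

lemma cos_pow_sum (n j : ℕ) (hjn : j < n) (c : ℝ) :
    ∑ i ∈ Finset.range n, ((Real.cos (2 * π * i / n + c) : ℂ)) ^ j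
      = n * (if j % 2 = 0 then (j.choose (j / 2) : ℂ) / 2 ^ j else 0) := by
  have hn : 0 < n := by omega
  have expand : ∀ i : ℕ, ((Real.cos (2 * π * i / n + c) : ℂ)) ^ j
      = (∑ t ∈ Finset.range (j + 1),
          Complex.exp ((((2 * t - j : ℤ) : ℝ) * (2 * π * i / n + c) : ℝ) * Complex.I)
            * (j.choose t)) / 2 ^ j := by
    intro i
    set β : ℝ := 2 * π * i / n + c with hβ
    have hcos : ((Real.cos β : ℂ))
        = (Complex.exp (β * Complex.I) + Complex.exp (-β * Complex.I)) / 2 := by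
      rw [Complex.ofReal_cos, Complex.cos]
    rw [hcos, div_pow, add_pow]
    congr 1
    apply Finset.sum_congr rfl
    intro t ht
    simp only [Finset.mem_range] at ht
    have ht' : t ≤ j := by omega
    rw [← Complex.exp_nat_mul, ← Complex.exp_nat_mul, ← Complex.exp_add]
    congr 2
    push_cast [ht']
    ring
  simp_rw [expand]
  rw [← Finset.sum_div, Finset.sum_comm]
  have inner : ∀ t ∈ Finset.range (j + 1),
      ∑ i ∈ Finset.range n,
        Complex.exp ((((2 * t - j : ℤ) : ℝ) * (2 * π * i / n + c) : ℝ) * Complex.I)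
          * (j.choose t)
        = (if (2 * t - j : ℤ) = 0 then (n : ℂ) else 0) * (j.choose t) := by
    intro t ht
    simp only [Finset.mem_range] at ht
    rw [← Finset.sum_mul, sum_exp_eq n hn (2 * t - j : ℤ) (by omega) c]
  rw [Finset.sum_congr rfl inner]
  by_cases hpar : j % 2 = 0
  · rw [if_pos hpar, Finset.sum_eq_single (j / 2)]
    · rw [if_pos (by omega : (2 * ((j / 2 : ℕ) : ℤ) - j) = 0)]
      ring
    · intro t ht htne
      simp only [Finset.mem_range] at ht
      rw [if_neg (by omega), zero_mul]
    · intro h; exact absurd (Finset.mem_range.2 (by omega)) h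
  · rw [if_neg hpar, mul_zero]
    rw [Finset.sum_eq_zero, zero_div]
    intro t ht
    rw [if_neg (by omega), zero_mul]

lemma even_reindex (N : ℕ) (f : ℕ → ℂ) :
    ∑ t ∈ Finset.range (N + 1), (if t % 2 = 0 then f t else 0)
      = ∑ k ∈ Finset.range (N / 2 + 1), f (2 * k) := by
  rw [← Finset.sum_filter]
  apply Finset.sum_nbij' (i := fun t => t / 2) (j := fun k => 2 * k)
  · intro a ha
    simp only [Finset.mem_filter, Finset.mem_range] at ha ⊢
    omega
  · intro a ha
    simp only [Finset.mem_filter, Finset.mem_range] at ha ⊢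
    omega
  · intro a ha
    simp only [Finset.mem_filter, Finset.mem_range] at ha
    omega
  · intro a ha
    omega
  · intro a ha
    simp only [Finset.mem_filter, Finset.mem_range] at ha
    congr 1
    omega

lemma key_sum (n m : ℕ) (hmn : m < n) (A B : ℂ) (c : ℝ) :
    ∑ i ∈ Finset.range n, (A + B * ((Real.cos (2 * π * i / n + c) : ℝ) : ℂ)) ^ m
      = n * ∑ k ∈ Finset.range (m / 2 + 1),
          (m.choose (2 * k) : ℂ) * A ^ (m - 2 * k) * B ^ (2 * k)
            * ((2 * k).choose k : ℂ) / 4 ^ k := by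
  simp_rw [add_comm A, add_pow]
  rw [Finset.sum_comm]
  have step : ∀ t ∈ Finset.range (m + 1),
      ∑ i ∈ Finset.range n,
        (B * ((Real.cos (2 * π * i / n + c) : ℝ) : ℂ)) ^ t * A ^ (m - t) * (m.choose t : ℂ)
        = (n : ℂ) * (if t % 2 = 0
            then B ^ t * A ^ (m - t) * (m.choose t : ℂ) * ((t.choose (t / 2) : ℂ)) / 2 ^ t
            else 0) := by
    intro t ht
    simp only [Finset.mem_range] at ht
    simp_rw [mul_pow]
    have h1 : ∀ i : ℕ,
        B ^ t * ((Real.cos (2 * π * i / n + c) : ℝ) : ℂ) ^ t * A ^ (m - t) * (m.choose t : ℂ)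
          = (B ^ t * A ^ (m - t) * (m.choose t : ℂ)) * ((Real.cos (2 * π * i / n + c) : ℝ) : ℂ) ^ t :=
      fun i => by ring
    simp_rw [h1]
    rw [← Finset.mul_sum, cos_pow_sum n t (by omega) c]
    by_cases hpar : t % 2 = 0
    · rw [if_pos hpar, if_pos hpar]; ring
    · rw [if_neg hpar, if_neg hpar]; ring
  rw [Finset.sum_congr rfl step, ← Finset.mul_sum, even_reindex m
    (fun t => B ^ t * A ^ (m - t) * (m.choose t : ℂ) * ((t.choose (t / 2) : ℂ)) / 2 ^ t)]
  congr 1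
  apply Finset.sum_congr rfl
  intro k _
  have h2 : (2 * k) / 2 = k := by omega
  have h3 : (2 : ℂ) ^ (2 * k) = 4 ^ k := by
    rw [pow_mul]; norm_num
  rw [h2, h3]
  ring

theorem sum_pow_dist_regular_ngon (n m : ℕ) (hn : 2 ≤ n) (hm : 1 ≤ m) (hmn : m ≤ n - 1)
    (O X : EuclideanSpace ℝ (Fin 2)) (r ℓ φ : ℝ)
    (P : ℕ → EuclideanSpace ℝ (Fin 2))
    (hP : ∀ k, P k = O + r • (WithLp.equiv 2 (Fin 2 → ℝ)).symm
      ![Real.cos (2 * k * π / n + φ), Real.sin (2 * k * π / n + φ)])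
    (hX : dist X O = ℓ) :
    ∑ i ∈ Finset.range n, dist X (P i) ^ (2 * m)
      = n * ((r ^ 2 + ℓ ^ 2) ^ m
        + ∑ k ∈ Finset.Icc 1 (m / 2),
            (m.choose (2 * k) : ℝ) * (r ^ 2 + ℓ ^ 2) ^ (m - 2 * k) * (r * ℓ) ^ (2 * k)
              * ((2 * k).choose k : ℝ)) := by
  have hmn' : m < n := by omega
  set a : ℝ := X 0 - O 0 with ha
  set b : ℝ := X 1 - O 1 with hb
  have hℓ0 : 0 ≤ ℓ := hX ▸ dist_nonneg
  have hab : a ^ 2 + b ^ 2 = ℓ ^ 2 := by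
    have : dist X O ^ 2 = a ^ 2 + b ^ 2 := by
      rw [EuclideanSpace.dist_eq, Real.sq_sqrt (by positivity)]
      simp [Fin.sum_univ_two, Real.dist_eq, sq_abs, ha, hb]
    rw [hX] at this
    linarith
  -- polar form of X - O
  obtain ⟨ψ, hψa, hψb⟩ : ∃ ψ, a = ℓ * Real.cos ψ ∧ b = ℓ * Real.sin ψ := by
    rcases eq_or_lt_of_le hℓ0 with h0 | h0
    · have haz : a = 0 := by nlinarith
      have hbz : b = 0 := by nlinarith
      exact ⟨0, by simp [haz, ← h0], by simp [hbz, ← h0]⟩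
    · set z : ℂ := ⟨a, b⟩ with hz
      have habs : ‖z‖ = ℓ := by
        rw [Complex.norm_def, Complex.normSq_mk]
        rw [show a * a + b * b = ℓ ^ 2 by nlinarith]
        exact Real.sqrt_sq hℓ0
      have h := Complex.norm_mul_cos_add_sin_mul_I z
      rw [habs] at h
      refine ⟨z.arg, ?_, ?_⟩
      · have := congrArg Complex.re h; simpa [Complex.cos_ofReal_re, hz] using this.symm
      · have := congrArg Complex.im h; simpa [Complex.sin_ofReal_re, hz] using this.symm
  -- squared distance to each vertex
  have hdist : ∀ i : ℕ, dist X (P i) ^ 2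
      = (r ^ 2 + ℓ ^ 2) + (-(2 * r * ℓ)) * Real.cos (2 * π * i / n + (φ - ψ)) := by
    intro i
    set θ : ℝ := 2 * i * π / n + φ with hθ
    have h0 : P i 0 = O 0 + r * Real.cos θ := by
      rw [hP i]; simp [hθ]
    have h1 : P i 1 = O 1 + r * Real.sin θ := by
      rw [hP i]; simp [hθ]
    have hd2 : dist X (P i) ^ 2 = (X 0 - P i 0) ^ 2 + (X 1 - P i 1) ^ 2 := by
      rw [EuclideanSpace.dist_eq, Real.sq_sqrt (by positivity)]
      simp [Fin.sum_univ_two, Real.dist_eq, sq_abs]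
    have harg : 2 * π * i / n + (φ - ψ) = θ - ψ := by rw [hθ]; ring
    rw [hd2, harg, show X 0 - P i 0 = a - r * Real.cos θ by rw [h0]; ring,
      show X 1 - P i 1 = b - r * Real.sin θ by rw [h1]; ring, hψa, hψb]
    have hpyθ := Real.sin_sq_add_cos_sq θ
    have hpyψ := Real.sin_sq_add_cos_sq ψ
    have hcs := Real.cos_sub θ ψ
    linear_combination ℓ ^ 2 * hpyψ + r ^ 2 * hpyθ + 2 * r * ℓ * hcs
  -- reduce to the key complex identity
  have keyR : ∑ i ∈ Finset.range n,
      ((r ^ 2 + ℓ ^ 2) + (-(2 * r * ℓ)) * Real.cos (2 * π * i / n + (φ - ψ))) ^ m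
      = (n : ℝ) * ∑ k ∈ Finset.range (m / 2 + 1),
          (m.choose (2 * k) : ℝ) * (r ^ 2 + ℓ ^ 2) ^ (m - 2 * k) * (-(2 * r * ℓ)) ^ (2 * k)
            * ((2 * k).choose k : ℝ) / (4 : ℝ) ^ k := by
    have h := key_sum n m hmn' ((r ^ 2 + ℓ ^ 2 : ℝ) : ℂ) ((-(2 * r * ℓ) : ℝ) : ℂ) (φ - ψ)
    exact_mod_cast h
  calc ∑ i ∈ Finset.range n, dist X (P i) ^ (2 * m)
      = ∑ i ∈ Finset.range n,
          ((r ^ 2 + ℓ ^ 2) + (-(2 * r * ℓ)) * Real.cos (2 * π * i / n + (φ - ψ))) ^ m := by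
        apply Finset.sum_congr rfl
        intro i _
        rw [show 2 * m = m * 2 by ring, pow_mul, ← hdist i]
        rw [← pow_mul]
        ring_nf
    _ = (n : ℝ) * ∑ k ∈ Finset.range (m / 2 + 1),
          (m.choose (2 * k) : ℝ) * (r ^ 2 + ℓ ^ 2) ^ (m - 2 * k) * (-(2 * r * ℓ)) ^ (2 * k)
            * ((2 * k).choose k : ℝ) / (4 : ℝ) ^ k := keyR
    _ = n * ((r ^ 2 + ℓ ^ 2) ^ m
        + ∑ k ∈ Finset.Icc 1 (m / 2),
            (m.choose (2 * k) : ℝ) * (r ^ 2 + ℓ ^ 2) ^ (m - 2 * k) * (r * ℓ) ^ (2 * k)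
              * ((2 * k).choose k : ℝ)) := by
        congr 1
        have hins : Finset.range (m / 2 + 1) = insert 0 (Finset.Icc 1 (m / 2)) := by
          ext x; simp only [Finset.mem_range, Finset.mem_insert, Finset.mem_Icc]; omega
        rw [hins, Finset.sum_insert (by simp)]
        congr 1
        · simp
        · apply Finset.sum_congr rfl
          intro k _
          have hB : (-(2 * r * ℓ)) ^ (2 * k) = 4 ^ k * (r * ℓ) ^ (2 * k) := by
            rw [show -(2 * r * ℓ) = (-2) * (r * ℓ) by ring, mul_pow,
              show ((-2 : ℝ)) ^ (2 * k) = 4 ^ k by rw [pow_mul]; norm_num]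
          rw [hB]
          have h4 : (4 : ℝ) ^ k ≠ 0 := by positivity
          field_simp
end

section
/- Let n ≥ 2 and 1 ≤ m ≤ n-1, and fix a regular n-gon with center O and circumradius r > 0. If S > n·r^{2m}, then the set of points X in the plane with Σ_{i=1}^n dist(X, P_i)^{2m} = S is a circle centered at O; if S = n·r^{2m} it is the single point {O}; and if S < n·r^{2m} it is empty. -/
open Real Finset

lemma sum_exp_eq_zero (n : ℕ) (hn : 0 < n) (t : ℤ) (ht0 : t ≠ 0) (htn : t.natAbs < n) (φ : ℝ) :
    ∑ k ∈ range n, Complex.exp (((t : ℝ) * (2 * k * π / n + φ)) * Complex.I) = 0 := by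
  set ζ : ℂ := Complex.exp (((t:ℝ) * (2 * π / n)) * Complex.I) with hζ
  have hn' : (n:ℂ) ≠ 0 := Nat.cast_ne_zero.mpr hn.ne'
  have hterm : ∀ k : ℕ, Complex.exp (((t : ℝ) * (2 * k * π / n + φ)) * Complex.I)
      = Complex.exp (((t:ℝ) * φ) * Complex.I) * ζ ^ k := by
    intro k
    rw [hζ, ← Complex.exp_nat_mul, ← Complex.exp_add]
    congr 1
    push_cast
    field_simp
    ring
  have hζn : ζ ^ n = 1 := by
    rw [hζ, ← Complex.exp_nat_mul]
    have : ((n:ℂ) * (((t:ℝ) * (2 * π / n)) * Complex.I)) = (t:ℤ) * (2 * (π:ℂ) * Complex.I) := by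
      push_cast
      field_simp
    rw [this, Complex.exp_int_mul_two_pi_mul_I]
  have hζ1 : ζ ≠ 1 := by
    intro h
    rw [hζ, Complex.exp_eq_one_iff] at h
    obtain ⟨k, hk⟩ := h
    have hI : (((t:ℝ) * (2 * π / n) : ℝ) : ℂ) = (((k:ℝ) * (2*π) : ℝ) : ℂ) := by
      apply mul_right_cancel₀ Complex.I_ne_zero
      push_cast
      push_cast at hk
      rw [hk]; ring
    have hr : (t:ℝ) * (2 * π / n) = (k:ℝ) * (2 * π) := Complex.ofReal_inj.mp hI
    have hnr : (n:ℝ) ≠ 0 := Nat.cast_ne_zero.mpr hn.ne'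
    have htk : (t:ℝ) = (k:ℝ) * n := by
      field_simp at hr
      have hπ := Real.pi_ne_zero
      nlinarith [Real.pi_pos]
    have htk' : t = k * n := by exact_mod_cast htk
    have : t.natAbs = k.natAbs * n := by
      rw [htk', Int.natAbs_mul, Int.natAbs_natCast]
    have hk0 : k.natAbs ≠ 0 := by
      intro h0
      exact ht0 (by simp [htk', Int.natAbs_eq_zero.mp h0])
    have : n ≤ k.natAbs * n := Nat.le_mul_of_pos_left _ (Nat.pos_of_ne_zero hk0)
    omega
  calc ∑ k ∈ range n, Complex.exp (((t : ℝ) * (2 * k * π / n + φ)) * Complex.I)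
      = Complex.exp (((t:ℝ) * φ) * Complex.I) * ∑ k ∈ range n, ζ ^ k := by
        rw [Finset.mul_sum]; exact Finset.sum_congr rfl (fun k _ => hterm k)
    _ = 0 := by rw [geom_sum_eq hζ1, hζn]; simp
lemma key_sum_s17 (n m : ℕ) (hn : 0 < n) (hmn : m < n) (r φ : ℝ) (w : ℂ) :
    ∑ k ∈ range n, ((w - (r:ℂ) * Complex.exp (((2*k*π/n + φ) : ℝ) * Complex.I)) *
        (starRingEnd ℂ) (w - (r:ℂ) * Complex.exp (((2*k*π/n + φ) : ℝ) * Complex.I))) ^ m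
      = n * ∑ a ∈ range (m+1),
          ((m.choose a : ℂ))^2 * (w * (starRingEnd ℂ) w)^a * (r:ℂ)^(2*(m-a)) := by
  set u : ℕ → ℂ := fun k => Complex.exp (((2*k*π/n + φ) : ℝ) * Complex.I) with hu
  set c : ℕ → ℂ := fun k => (r:ℂ) * u k with hc
  have hconju : ∀ θ : ℝ, (starRingEnd ℂ) (Complex.exp ((θ:ℂ) * Complex.I))
      = Complex.exp (-((θ:ℂ) * Complex.I)) := by
    intro θ
    rw [← Complex.exp_conj, map_mul, Complex.conj_ofReal, Complex.conj_I]
    ring_nf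
  have hu1 : ∀ k, u k * (starRingEnd ℂ) (u k) = 1 := by
    intro k
    rw [hu]
    simp only [hconju]
    rw [← Complex.exp_add]
    simp
  set F : ℕ → ℕ → ℕ → ℂ := fun k a b =>
    ((-1)^(a+m) * w^a * (c k)^(m-a) * ((m.choose a : ℕ) : ℂ)) *
    ((-1)^(b+m) * ((starRingEnd ℂ) w)^b * ((starRingEnd ℂ) (c k))^(m-b) * ((m.choose b : ℕ) : ℂ))
    with hF
  have h1 : ∀ k, ((w - c k) * (starRingEnd ℂ) (w - c k)) ^ m
      = ∑ a ∈ range (m+1), ∑ b ∈ range (m+1), F k a b := by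
    intro k
    rw [map_sub, mul_pow, sub_pow, sub_pow, Finset.sum_mul_sum]
  -- vanishing of off-diagonal exponential sums
  have hvan : ∀ a b : ℕ, a ≤ m → b ≤ m → a ≠ b →
      ∑ k ∈ range n, (u k)^(m-a) * ((starRingEnd ℂ) (u k))^(m-b) = 0 := by
    intro a b ha hb hab
    have ht0 : ((b:ℤ) - a) ≠ 0 := by omega
    have htn : ((b:ℤ) - a).natAbs < n := by omega
    have hterm : ∀ k : ℕ, (u k)^(m-a) * ((starRingEnd ℂ) (u k))^(m-b)
        = Complex.exp (((((b:ℤ) - a : ℤ) : ℝ) * (2*k*π/n + φ)) * Complex.I) := by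
      intro k
      rw [hu]
      simp only [hconju]
      rw [← Complex.exp_nat_mul, ← Complex.exp_nat_mul, ← Complex.exp_add]
      congr 1
      push_cast [Nat.cast_sub ha, Nat.cast_sub hb]
      ring
    rw [Finset.sum_congr rfl (fun k _ => hterm k)]
    exact sum_exp_eq_zero n hn _ ht0 htn φ
  have h2 : ∀ a ∈ range (m+1), ∀ b ∈ range (m+1), a ≠ b →
      ∑ k ∈ range n, F k a b = 0 := by
    intro a ha b hb hab
    rw [mem_range] at ha hb
    have hfac : ∀ k, F k a b =
        ((-1)^(a+m) * w^a * ((m.choose a : ℕ) : ℂ) * ((-1)^(b+m) * ((starRingEnd ℂ) w)^b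
          * ((m.choose b : ℕ) : ℂ)) * (r:ℂ)^(m-a) * (r:ℂ)^(m-b)) *
        ((u k)^(m-a) * ((starRingEnd ℂ) (u k))^(m-b)) := by
      intro k
      rw [hF]
      simp only [hc, map_mul, Complex.conj_ofReal, mul_pow]
      ring
    rw [Finset.sum_congr rfl (fun k _ => hfac k), ← Finset.mul_sum,
      hvan a b (by omega) (by omega) hab, mul_zero]
  have h3 : ∀ a ∈ range (m+1),
      ∑ k ∈ range n, F k a a
        = n * (((m.choose a : ℕ):ℂ)^2 * (w * (starRingEnd ℂ) w)^a * (r:ℂ)^(2*(m-a))) := by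
    intro a ha
    rw [mem_range] at ha
    have hdiag : ∀ k, F k a a
        = ((m.choose a : ℕ):ℂ)^2 * (w * (starRingEnd ℂ) w)^a * (r:ℂ)^(2*(m-a)) := by
      intro k
      rw [hF]
      simp only [hc, map_mul, Complex.conj_ofReal, mul_pow]
      have h1' : (u k)^(m-a) * ((starRingEnd ℂ) (u k))^(m-a) = 1 := by
        rw [← mul_pow, hu1, one_pow]
      have h4 : (-1:ℂ)^(a+m) * (-1:ℂ)^(a+m) = 1 := by
        rw [← pow_add, ← two_mul, pow_mul]; norm_num
      linear_combination ((((m.choose a:ℕ):ℂ))^2 * w^a * ((starRingEnd ℂ) w)^a *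
          (r:ℂ)^(m-a) * (r:ℂ)^(m-a) * ((-1:ℂ)^(a+m)) * ((-1:ℂ)^(a+m))) * h1' +
        ((((m.choose a:ℕ):ℂ))^2 * w^a * ((starRingEnd ℂ) w)^a *
          (r:ℂ)^(m-a) * (r:ℂ)^(m-a)) * h4
    rw [Finset.sum_congr rfl (fun k _ => hdiag k), Finset.sum_const, card_range, nsmul_eq_mul]
  calc ∑ k ∈ range n, ((w - c k) * (starRingEnd ℂ) (w - c k)) ^ m
      = ∑ k ∈ range n, ∑ a ∈ range (m+1), ∑ b ∈ range (m+1), F k a b :=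
        Finset.sum_congr rfl (fun k _ => h1 k)
    _ = ∑ a ∈ range (m+1), ∑ k ∈ range n, ∑ b ∈ range (m+1), F k a b := Finset.sum_comm
    _ = ∑ a ∈ range (m+1), ∑ b ∈ range (m+1), ∑ k ∈ range n, F k a b :=
        Finset.sum_congr rfl (fun a _ => Finset.sum_comm)
    _ = ∑ a ∈ range (m+1), ∑ k ∈ range n, F k a a := by
        refine Finset.sum_congr rfl (fun a ha => ?_)
        refine Finset.sum_eq_single_of_mem a ha (fun b hb hba => h2 a ha b hb (Ne.symm hba))
    _ = n * ∑ a ∈ range (m+1),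
          ((m.choose a : ℂ))^2 * (w * (starRingEnd ℂ) w)^a * (r:ℂ)^(2*(m-a)) := by
        rw [Finset.mul_sum]
        exact Finset.sum_congr rfl h3

lemma dist_sq_coord (X Y : EuclideanSpace ℝ (Fin 2)) :
    dist X Y ^ 2 = (X 0 - Y 0)^2 + (X 1 - Y 1)^2 := by
  rw [EuclideanSpace.dist_eq, Real.sq_sqrt (by positivity)]
  simp [Fin.sum_univ_two, Real.dist_eq, sq_abs]

theorem locus_sum_pow_dist_regular_ngon (n m : ℕ) (hn : 2 ≤ n) (hm : 1 ≤ m) (hmn : m ≤ n - 1)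
    (O : EuclideanSpace ℝ (Fin 2)) (r φ : ℝ) (hr : 0 < r)
    (P : ℕ → EuclideanSpace ℝ (Fin 2))
    (hP : ∀ k, P k = O + r • (WithLp.equiv 2 (Fin 2 → ℝ)).symm
      ![Real.cos (2 * k * π / n + φ), Real.sin (2 * k * π / n + φ)])
    (S : ℝ) :
    (S > n * r ^ (2 * m) →
      ∃ ℓ > (0 : ℝ),
        {X : EuclideanSpace ℝ (Fin 2) | ∑ i ∈ Finset.range n, dist X (P i) ^ (2 * m) = S}
          = {X | dist X O = ℓ}) ∧
    (S = n * r ^ (2 * m) →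
      {X : EuclideanSpace ℝ (Fin 2) | ∑ i ∈ Finset.range n, dist X (P i) ^ (2 * m) = S}
        = {O}) ∧
    (S < n * r ^ (2 * m) →
      {X : EuclideanSpace ℝ (Fin 2) | ∑ i ∈ Finset.range n, dist X (P i) ^ (2 * m) = S}
        = ∅) := by
  have hn0 : 0 < n := by omega
  have hmn' : m < n := by omega
  set g : ℝ → ℝ := fun t => n * ∑ a ∈ range (m+1), (m.choose a : ℝ)^2 * t^a * r^(2*(m-a))
    with hg
  have hg0 : g 0 = n * r ^ (2*m) := by
    rw [hg]
    simp only
    congr 1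
    rw [Finset.sum_eq_single_of_mem 0 (mem_range.mpr (by omega))]
    · simp
    · intro b _ hb0
      simp [zero_pow hb0]
  have hmono : StrictMonoOn g (Set.Ici 0) := by
    intro s hs t ht hst
    simp only [hg]
    have hs' : (0:ℝ) ≤ s := hs
    apply mul_lt_mul_of_pos_left _ (by positivity : (0:ℝ) < (n:ℝ))
    apply Finset.sum_lt_sum
    · intro a _
      have h1 : s^a ≤ t^a := pow_le_pow_left₀ hs' hst.le a
      have hr2 : (0:ℝ) ≤ r^(2*(m-a)) := by positivity
      have hc2 : (0:ℝ) ≤ (m.choose a : ℝ)^2 := sq_nonneg _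
      exact mul_le_mul_of_nonneg_right (mul_le_mul_of_nonneg_left h1 hc2) hr2
    · refine ⟨m, mem_range.mpr (by omega), ?_⟩
      simp only [Nat.choose_self, Nat.cast_one, one_pow, one_mul, Nat.sub_self, mul_zero,
        pow_zero, mul_one]
      exact pow_lt_pow_left₀ hst hs' (by omega)
  have hcont : Continuous g := by
    rw [hg]
    apply Continuous.mul continuous_const
    apply continuous_finset_sum
    intro a _
    fun_prop
  have hge : ∀ t : ℝ, 1 ≤ t → (n:ℝ) * t^m ≤ g t := by
    intro t ht
    rw [hg]
    simp only
    apply mul_le_mul_of_nonneg_left _ (by positivity)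
    have ht0 : (0:ℝ) ≤ t := by linarith
    calc t^m = (m.choose m:ℝ)^2 * t^m * r^(2*(m-m)) := by simp
      _ ≤ ∑ a ∈ range (m+1), (m.choose a : ℝ)^2 * t^a * r^(2*(m-a)) :=
        Finset.single_le_sum (f := fun a => (m.choose a : ℝ)^2 * t^a * r^(2*(m-a)))
          (fun a _ => by positivity) (mem_range.mpr (by omega))
  have hmain : ∀ X : EuclideanSpace ℝ (Fin 2),
      ∑ i ∈ Finset.range n, dist X (P i) ^ (2*m) = g (dist X O ^ 2) := by
    intro X
    set w : ℂ := (↑(X 0 - O 0) + ↑(X 1 - O 1) * Complex.I) with hw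
    have hdXO : dist X O ^ 2 = Complex.normSq w := by
      rw [dist_sq_coord X O, hw, Complex.normSq_add_mul_I]
    have hdXP : ∀ i : ℕ, dist X (P i) ^ 2
        = Complex.normSq (w - (r:ℂ) * Complex.exp (((2*i*π/n + φ) : ℝ) * Complex.I)) := by
      intro i
      have h0 : P i 0 = O 0 + r * Real.cos (2*i*π/n + φ) := by
        rw [hP i]
        simp [PiLp.add_apply, PiLp.smul_apply, WithLp.equiv_symm_apply, smul_eq_mul]
      have h1 : P i 1 = O 1 + r * Real.sin (2*i*π/n + φ) := by
        rw [hP i]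
        simp [PiLp.add_apply, PiLp.smul_apply, WithLp.equiv_symm_apply, smul_eq_mul]
      rw [dist_sq_coord X (P i), h0, h1, Complex.normSq_apply]
      simp only [hw, Complex.sub_re, Complex.sub_im, Complex.add_re, Complex.add_im,
        Complex.ofReal_re, Complex.ofReal_im, Complex.mul_re, Complex.mul_im,
        Complex.I_re, Complex.I_im, Complex.exp_ofReal_mul_I_re, Complex.exp_ofReal_mul_I_im]
      ring
    have hkey := key_sum_s17 n m hn0 hmn' r φ w
    simp only [Complex.mul_conj] at hkey
    have hkeyR : ∑ i ∈ Finset.range n,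
        (Complex.normSq (w - (r:ℂ) * Complex.exp (((2*i*π/n + φ) : ℝ) * Complex.I)))^m
        = (n:ℝ) * ∑ a ∈ range (m+1), (m.choose a:ℝ)^2 * (Complex.normSq w)^a * r^(2*(m-a)) := by
      exact_mod_cast hkey
    calc ∑ i ∈ Finset.range n, dist X (P i) ^ (2*m)
        = ∑ i ∈ Finset.range n, (dist X (P i)^2)^m := by
          refine Finset.sum_congr rfl fun i _ => ?_
          rw [← pow_mul]
      _ = ∑ i ∈ Finset.range n,
          (Complex.normSq (w - (r:ℂ) * Complex.exp (((2*i*π/n + φ) : ℝ) * Complex.I)))^m :=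
          Finset.sum_congr rfl fun i _ => by rw [hdXP i]
      _ = (n:ℝ) * ∑ a ∈ range (m+1), (m.choose a:ℝ)^2 * (Complex.normSq w)^a * r^(2*(m-a)) :=
          hkeyR
      _ = g (dist X O ^ 2) := by rw [hg, hdXO]
  refine ⟨?_, ?_, ?_⟩
  · -- S > n r^{2m}
    intro hS
    set T := max 1 S with hT
    have hT1 : (1:ℝ) ≤ T := le_max_left _ _
    have hTS : S ≤ T := le_max_right _ _
    have hgT : S ≤ g T := by
      have h1 := hge T hT1
      have h2 : T ≤ T^m := le_self_pow₀ (by linarith) (by omega)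
      have h3 : (2:ℝ) ≤ (n:ℝ) := by exact_mod_cast hn
      nlinarith
    have hIcc : S ∈ Set.Icc (g 0) (g T) := ⟨by rw [hg0]; linarith, hgT⟩
    obtain ⟨t, ht, hgt⟩ :=
      intermediate_value_Icc (le_trans zero_le_one hT1) hcont.continuousOn hIcc
    have ht0 : 0 < t := by
      rcases lt_or_eq_of_le ht.1 with h | h
      · exact h
      · exfalso
        rw [← h] at hgt
        rw [hg0] at hgt
        linarith
    refine ⟨Real.sqrt t, Real.sqrt_pos.mpr ht0, ?_⟩
    ext X
    simp only [Set.mem_setOf_eq]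
    rw [hmain X]
    constructor
    · intro h
      have h2 : dist X O ^ 2 = t :=
        hmono.injOn (Set.mem_Ici.mpr (by positivity)) (Set.mem_Ici.mpr ht.1)
          (by rw [h, hgt])
      rw [← h2, Real.sqrt_sq dist_nonneg]
    · intro h
      rw [h, Real.sq_sqrt ht0.le, hgt]
  · -- S = n r^{2m}
    intro hS
    ext X
    simp only [Set.mem_setOf_eq, Set.mem_singleton_iff]
    rw [hmain X]
    constructor
    · intro h
      have h2 : dist X O ^ 2 = 0 :=
        hmono.injOn (Set.mem_Ici.mpr (by positivity)) (Set.mem_Ici.mpr le_rfl)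
          (by rw [h, hg0, hS])
      have : dist X O = 0 := by
        have := pow_eq_zero_iff (n := 2) (by omega) |>.mp h2
        exact this
      exact dist_eq_zero.mp this
    · intro h
      rw [h]
      simp only [dist_self]
      rw [zero_pow (by omega : (2:ℕ) ≠ 0)]
      rw [hg0, hS]
  · -- S < n r^{2m}
    intro hS
    rw [Set.eq_empty_iff_forall_notMem]
    intro X hX
    simp only [Set.mem_setOf_eq] at hX
    rw [hmain X] at hX
    have h2 : g 0 ≤ g (dist X O ^ 2) :=
      hmono.monotoneOn (Set.mem_Ici.mpr le_rfl) (Set.mem_Ici.mpr (by positivity))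
        (by positivity)
    rw [hg0] at h2
    linarith [hX ▸ h2]
end
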